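/- Suppose q is a primitive n-th root of unity in k with n ≥ 2. Then in the algebra B_q(f), the elements f(u) and f(v) are central if and only if n divides j for every j in the support of f. Moreover, if n divides j for every j in the support of f, then wⁿ is also central in B_q(f). -/

import Mathlib

set_option linter.unusedSectionVars false
set_option maxHeartbeats 1000000

open FreeAlgebra

/-- The defining relations of the algebra `B_q(f)` for `f = ∑_{j=0}^{d} c_j tʲ`:
generators `0 ↦ u`, `1 ↦ v`, `2 ↦ w` subject to `uv = qvu`, `wu = quw + f(v)`,
`wv = q⁻¹vw + f(u)`. -/
inductive BqfRel (k : Type*) [Field k] (q : k) (d : ℕ) (c : ℕ → k) :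
    FreeAlgebra k (Fin 3) → FreeAlgebra k (Fin 3) → Prop
  | uv : BqfRel k q d c (ι k (0 : Fin 3) * ι k (1 : Fin 3))
      (q • (ι k (1 : Fin 3) * ι k (0 : Fin 3)))
  | wu : BqfRel k q d c (ι k (2 : Fin 3) * ι k (0 : Fin 3))
      (q • (ι k (0 : Fin 3) * ι k (2 : Fin 3)) +
        ∑ j ∈ Finset.range (d + 1), c j • ι k (1 : Fin 3) ^ j)
  | wv : BqfRel k q d c (ι k (2 : Fin 3) * ι k (1 : Fin 3))
      (q⁻¹ • (ι k (1 : Fin 3) * ι k (2 : Fin 3)) +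
        ∑ j ∈ Finset.range (d + 1), c j • ι k (0 : Fin 3) ^ j)

namespace BqfAux

section
variable {k : Type*} [Field k] {B : Type*} [Ring B] [Algebra k B]

lemma upow_v (q : k) (u v : B) (ruv : u * v = q • (v * u)) :
    ∀ j : ℕ, u ^ j * v = q ^ j • (v * u ^ j) := by
  intro j
  induction j with
  | zero => simp
  | succ j ih =>
    calc u ^ (j+1) * v = u * (u ^ j * v) := by rw [pow_succ', mul_assoc]
    _ = q ^ j • (u * v * u ^ j) := by rw [ih, mul_smul_comm, mul_assoc]
    _ = q ^ (j+1) • (v * u ^ (j+1)) := by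
        rw [ruv, smul_mul_assoc, smul_smul, pow_succ, mul_comm (q ^ j) q, pow_succ', mul_assoc]

lemma v_u (q : k) (u v : B) (hq0 : q ≠ 0) (ruv : u * v = q • (v * u)) :
    v * u = q⁻¹ • (u * v) := by
  rw [ruv, smul_smul, inv_mul_cancel₀ hq0, one_smul]

lemma vpow_u (q : k) (u v : B) (hq0 : q ≠ 0) (ruv : u * v = q • (v * u)) :
    ∀ j : ℕ, v ^ j * u = (q⁻¹) ^ j • (u * v ^ j) := by
  intro j
  induction j with
  | zero => simp
  | succ j ih =>
    calc v ^ (j+1) * u = v * (v ^ j * u) := by rw [pow_succ', mul_assoc]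
    _ = q⁻¹ ^ j • (v * u * v ^ j) := by rw [ih, mul_smul_comm, mul_assoc]
    _ = q⁻¹ ^ (j+1) • (u * v ^ (j+1)) := by
        rw [v_u q u v hq0 ruv, smul_mul_assoc, smul_smul, pow_succ,
          mul_comm (q⁻¹ ^ j) q⁻¹, pow_succ', mul_assoc]

/-- `g = ∑ c j • x^j` commutes with `y`, provided `x^j * y = e^j • (y * x^j)`
and `c j ≠ 0 → e^j = 1`. -/
lemma poly_comm (e : k) (x y g : B) (d : ℕ) (c : ℕ → k)
    (hg : g = ∑ j ∈ Finset.range (d + 1), c j • x ^ j)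
    (hx : ∀ j : ℕ, x ^ j * y = e ^ j • (y * x ^ j))
    (hc : ∀ j ≤ d, c j ≠ 0 → e ^ j = 1) : g * y = y * g := by
  rw [hg, Finset.sum_mul, Finset.mul_sum]
  refine Finset.sum_congr rfl fun j hj => ?_
  rw [smul_mul_assoc, mul_smul_comm, hx j]
  rcases eq_or_ne (c j) 0 with h | h
  · simp [h]
  · rw [smul_smul, mul_comm (c j), ← smul_smul,
      hc j (Finset.mem_range_succ_iff.mp hj) h, one_smul]

lemma geom_zero (q : k) (hq1 : q ≠ 1) (j : ℕ) (hj : q ^ j = 1) :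
    (∑ i ∈ Finset.range j, q ^ i) = 0 := by
  have := geom_sum_mul q j
  rw [hj, sub_self] at this
  rcases mul_eq_zero.mp this with h | h
  · exact h
  · exact absurd (sub_eq_zero.mp h) hq1

/-- abstract form of `w * u^{j+1}` computation: if `w * u = e • (u * w) + g`
and `g` commutes with `u`, then ... -/
lemma w_upow (e : k) (u w g : B) (rwu : w * u = e • (u * w) + g)
    (hgu : g * u = u * g) :
    ∀ j : ℕ, w * u ^ (j + 1) =
      e ^ (j + 1) • (u ^ (j + 1) * w) + (∑ i ∈ Finset.range (j + 1), e ^ i) • (g * u ^ j) := by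
  intro j
  induction j with
  | zero => simpa using rwu
  | succ j ih =>
    have hgu' : g * u ^ (j + 1) = u ^ (j + 1) * g :=
      ((Commute.symm hgu).pow_left (j + 1)).symm
    calc w * u ^ (j + 2) = (w * u ^ (j + 1)) * u := by rw [pow_succ, mul_assoc]
    _ = e ^ (j+1) • (u ^ (j+1) * (w * u)) + (∑ i ∈ Finset.range (j+1), e ^ i) • (g * u ^ (j+1)) := by
        rw [ih, add_mul, smul_mul_assoc, smul_mul_assoc, mul_assoc, mul_assoc, ← pow_succ]
    _ = e ^ (j+2) • (u ^ (j+2) * w) + e ^ (j+1) • (u ^ (j+1) * g)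
          + (∑ i ∈ Finset.range (j+1), e ^ i) • (g * u ^ (j+1)) := by
        rw [rwu, mul_add, smul_add, mul_smul_comm, smul_smul, ← pow_succ, ← mul_assoc, ← pow_succ]
    _ = _ := by
        rw [hgu']
        simp only [show j+1+1 = j+2 from rfl, Finset.sum_range_succ, add_smul]
        module

lemma w_upow_comm (e : k) (u w g : B) (he1 : e ≠ 1) (rwu : w * u = e • (u * w) + g)
    (hgu : g * u = u * g) (j : ℕ) (hj : e ^ j = 1) : w * u ^ j = u ^ j * w := by
  cases j with
  | zero => simp
  | succ j =>
    rw [w_upow e u w g rwu hgu j, hj, one_smul, geom_zero e he1 (j+1) hj, zero_smul, add_zero]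

/-- powers of w: `w^{j+1} * u = e^{j+1} • (u * w^{j+1}) + (∑ e^i) • (g * w^j)`
provided `w * g = g * w`. -/
lemma wpow_u (e : k) (u w g : B) (rwu : w * u = e • (u * w) + g)
    (hgw : w * g = g * w) :
    ∀ j : ℕ, w ^ (j + 1) * u =
      e ^ (j + 1) • (u * w ^ (j + 1)) + (∑ i ∈ Finset.range (j + 1), e ^ i) • (g * w ^ j) := by
  intro j
  induction j with
  | zero => simpa using rwu
  | succ j ih =>
    calc w ^ (j + 2) * u = w * (w ^ (j + 1) * u) := by rw [pow_succ', mul_assoc]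
    _ = e ^ (j+1) • ((w * u) * w ^ (j+1)) + (∑ i ∈ Finset.range (j+1), e ^ i) • ((w * g) * w ^ j) := by
        rw [ih, mul_add, mul_smul_comm, mul_smul_comm, ← mul_assoc, ← mul_assoc]
    _ = e ^ (j+2) • (u * w ^ (j+2)) + e ^ (j+1) • (g * w ^ (j+1))
          + (∑ i ∈ Finset.range (j+1), e ^ i) • (g * w ^ (j+1)) := by
        rw [rwu, add_mul, smul_add, smul_mul_assoc, smul_smul, ← pow_succ, mul_assoc, ← pow_succ',
          hgw, mul_assoc, ← pow_succ']
    _ = _ := by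
        simp only [show j+1+1 = j+2 from rfl, Finset.sum_range_succ, add_smul]
        module

lemma wpow_u_comm (e : k) (u w g : B) (he1 : e ≠ 1) (rwu : w * u = e • (u * w) + g)
    (hgw : w * g = g * w) (j : ℕ) (hj : e ^ j = 1) : w ^ j * u = u * w ^ j := by
  cases j with
  | zero => simp
  | succ j =>
    rw [wpow_u e u w g rwu hgw j, hj, one_smul, geom_zero e he1 (j+1) hj, zero_smul, add_zero]

end

lemma poly_comm2 {k : Type*} [Field k] {B : Type*} [Ring B] [Algebra k B]
    (y x g : B) (d : ℕ) (c : ℕ → k)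
    (hg : g = ∑ j ∈ Finset.range (d+1), c j • x ^ j)
    (h : ∀ j ≤ d, c j ≠ 0 → y * x ^ j = x ^ j * y) : y * g = g * y := by
  rw [hg, Finset.mul_sum, Finset.sum_mul]
  refine Finset.sum_congr rfl fun j hj => ?_
  rcases eq_or_ne (c j) 0 with h0 | h0
  · simp [h0]
  · rw [mul_smul_comm, smul_mul_assoc, h j (Finset.mem_range_succ_iff.mp hj) h0]

lemma bqf_central {k : Type*} [Field k] (q : k) (d : ℕ) (c : ℕ → k)
    (z : RingQuot (BqfRel k q d c))
    (hu : RingQuot.mkAlgHom k (BqfRel k q d c) (ι k (0 : Fin 3)) * z =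
      z * RingQuot.mkAlgHom k (BqfRel k q d c) (ι k (0 : Fin 3)))
    (hv : RingQuot.mkAlgHom k (BqfRel k q d c) (ι k (1 : Fin 3)) * z =
      z * RingQuot.mkAlgHom k (BqfRel k q d c) (ι k (1 : Fin 3)))
    (hw : RingQuot.mkAlgHom k (BqfRel k q d c) (ι k (2 : Fin 3)) * z =
      z * RingQuot.mkAlgHom k (BqfRel k q d c) (ι k (2 : Fin 3))) :
    z ∈ Subalgebra.center k (RingQuot (BqfRel k q d c)) := by
  rw [Subalgebra.mem_center_iff]
  intro b
  obtain ⟨x, rfl⟩ := RingQuot.mkAlgHom_surjective k (BqfRel k q d c) b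
  refine FreeAlgebra.induction k (Fin 3)
    (motive := fun y => RingQuot.mkAlgHom k (BqfRel k q d c) y * z =
      z * RingQuot.mkAlgHom k (BqfRel k q d c) y) ?_ ?_ ?_ ?_ x
  · intro r
    rw [AlgHom.commutes]
    exact (Algebra.commutes r z).symm.trans rfl |>.symm ▸ Algebra.commutes r z
  · intro i
    fin_cases i
    · exact hu
    · exact hv
    · exact hw
  · intro a b ha hb
    rw [map_mul, mul_assoc, hb, ← mul_assoc, ha, mul_assoc]
  · intro a b ha hb
    rw [map_add, add_mul, mul_add, ha, hb]

end BqfAux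

namespace BqfRep

variable {k : Type*} [Field k] (q : k) (n : ℕ) [NeZero n]

/-- basis index -/
abbrev Idx (n : ℕ) := ZMod n × ℤ × ℤ

abbrev M (k : Type*) [Field k] (n : ℕ) := Idx n →₀ k

noncomputable def sgl (p : Idx n) : M k n := Finsupp.single p 1

noncomputable def opOf (f : Idx n → M k n) : Module.End k (M k n) :=
  (Finsupp.lift (M k n) k (Idx n)) f

lemma opOf_single (f : Idx n → M k n) (p : Idx n) (r : k) :
    opOf n f (Finsupp.single p r) = r • f p := by
  classical
  simp [opOf, Finsupp.lift_apply, Finsupp.sum_single_index]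

/-- `q ^ s.val` -/
noncomputable def qv (s : ZMod n) : k := q ^ s.val

variable (hqn : q ^ n = 1) (hq0 : q ≠ 0)

section
include hqn

lemma qpow_mod (m : ℕ) : q ^ (m % n) = q ^ m := by
  conv_rhs => rw [← Nat.mod_add_div m n, pow_add, pow_mul, hqn, one_pow, mul_one]

lemma qv_natCast (m : ℕ) : qv q n ((m : ZMod n)) = q ^ m := by
  rw [qv, ZMod.val_natCast, qpow_mod q n hqn]

lemma qv_add (s t : ZMod n) : qv q n (s + t) = qv q n s * qv q n t := by
  rw [qv, ZMod.val_add, qpow_mod q n hqn, pow_add, qv, qv]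

lemma qv_one' : qv q n (1 : ZMod n) = q := by
  have : ((1 : ℕ) : ZMod n) = 1 := by push_cast; ring
  rw [← this, qv_natCast q n hqn, pow_one]

lemma qv_add_one (s : ZMod n) : qv q n (s + 1) = q * qv q n s := by
  rw [qv_add q n hqn, qv_one' q n hqn, mul_comm]

include hq0
lemma qv_sub_one (s : ZMod n) : qv q n (s - 1) = q⁻¹ * qv q n s := by
  have h := qv_add_one q n hqn (s - 1)
  rw [sub_add_cancel] at h
  rw [h]
  field_simp

end

lemma qv_ne_zero (hq0 : q ≠ 0) (s : ZMod n) : qv q n s ≠ 0 := pow_ne_zero _ hq0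

/-- the `h`-coefficients -/
noncomputable def Hh (m j : ℕ) : k := (q ^ m)⁻¹ * q * ∑ i ∈ Finset.range m, (q ^ (j + 1)) ^ i

lemma Hh_rec (hq0 : q ≠ 0) (m j : ℕ) :
    Hh q (m + 1) j = q⁻¹ * Hh q m j + q ^ (m * j) := by
  rw [Hh, Hh, Finset.sum_range_succ, mul_add]
  congr 1
  · rw [pow_succ, mul_inv]; ring
  · rw [← pow_mul]
    field_simp
    rw [← pow_succ', ← pow_add]
    congr 1
    ring

lemma geom_zero' (e : k) (he1 : e ≠ 1) (j : ℕ) (hj : e ^ j = 1) :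
    (∑ i ∈ Finset.range j, e ^ i) = 0 := by
  have := geom_sum_mul e j
  rw [hj, sub_self] at this
  rcases mul_eq_zero.mp this with h | h
  · exact h
  · exact absurd (sub_eq_zero.mp h) he1


section
variable (hq : ∀ m : ℕ, q ^ m = 1 ↔ n ∣ m)

include hq

lemma hqn' : q ^ n = 1 := (hq n).mpr dvd_rfl

lemma hq0' : q ≠ 0 := by
  intro h
  have h1 := (hq n).mpr dvd_rfl
  rw [h, zero_pow (NeZero.ne n)] at h1
  exact zero_ne_one h1

lemma Hh_period (j : ℕ) (hcrit : ¬ n ∣ (j + 1)) (m : ℕ) :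
    Hh q (m + n) j = Hh q m j := by
  have hz : (q ^ (j+1)) ^ n = 1 := by
    rw [← pow_mul, mul_comm, pow_mul, hqn' q n hq, one_pow]
  have hz1 : q ^ (j+1) ≠ 1 := fun h => hcrit ((hq (j+1)).mp h)
  rw [Hh, Hh, Finset.sum_range_add]
  have : ∑ i ∈ Finset.range n, (q ^ (j+1)) ^ (m + i) = 0 := by
    have : ∑ i ∈ Finset.range n, (q ^ (j+1)) ^ (m + i)
        = (q ^ (j+1)) ^ m * ∑ i ∈ Finset.range n, (q ^ (j+1)) ^ i := by
      rw [Finset.mul_sum]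
      exact Finset.sum_congr rfl fun i _ => by rw [← pow_add]
    rw [this, geom_zero' (q ^ (j+1)) hz1 n hz, mul_zero]
  rw [this, add_zero, pow_add, hqn' q n hq, mul_one]

lemma Hh_mod (j : ℕ) (hcrit : ¬ n ∣ (j + 1)) (m : ℕ) :
    Hh q (m % n) j = Hh q m j := by
  conv_rhs => rw [← Nat.mod_add_div m n]
  generalize m / n = t
  induction t with
  | zero => rw [mul_zero, add_zero]
  | succ t ih =>
    rw [mul_add, mul_one, ← add_assoc, add_comm (m % n + n * t) n, ← add_comm (m % n + n * t) n,
      show m % n + n * t + n = (m % n + n * t) + n from rfl, Hh_period q n hq j hcrit, ih]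

lemma Hh_zmod_rec (j : ℕ) (hcrit : ¬ n ∣ (j + 1)) (s : ZMod n) :
    Hh q (s + 1).val j = q⁻¹ * Hh q s.val j + q ^ (s.val * j) := by
  have h1 : (s + 1).val = (s.val + 1) % n := by
    rw [ZMod.val_add]
    congr 1
    have : ((1 : ℕ) : ZMod n) = 1 := by push_cast; ring
    rw [← this, ZMod.val_natCast]
    have h2 : 1 % n = 1 := Nat.mod_eq_of_lt (by
      rcases Nat.lt_or_ge 1 n with h | h
      · exact h
      · interval_cases n
        · exact absurd rfl (NeZero.ne 0)
        · exfalso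
          exact hcrit ⟨j + 1, (one_mul _).symm⟩)
    rw [h2]
  rw [h1, Hh_mod q n hq j hcrit, Hh_rec q (hq0' q n hq) s.val j]

lemma qv_crit (j : ℕ) (hcrit : n ∣ (j + 1)) (s : ZMod n) :
    (qv q n s)⁻¹ = (qv q n s) ^ j := by
  have h1 : (qv q n s) ^ (j + 1) = 1 := by
    rw [qv, ← pow_mul, mul_comm, pow_mul, (hq (j+1)).mpr hcrit, one_pow]
  rw [pow_succ] at h1
  exact (eq_inv_of_mul_eq_one_left h1).symm

end

section
noncomputable def Uop : Module.End k (M k n) :=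
  opOf n (fun p => qv q n p.1 • sgl n (p.1, p.2.1 + 1, p.2.2))
noncomputable def Vop (k : Type*) [Field k] (n : ℕ) [NeZero n] : Module.End k (M k n) :=
  opOf n (fun p => sgl n (p.1 + 1, p.2.1, p.2.2 + 1))
noncomputable def Wop (j : ℕ) : Module.End k (M k n) :=
  opOf n (fun p =>
    if n ∣ (j + 1) then
      ((qv q n p.1)⁻¹ * (p.2.1 : k)) • sgl n (p.1 - 1, p.2.1 - 1, p.2.2 + j) +
      (q * (qv q n p.1)⁻¹ * (p.2.2 : k)) • sgl n (p.1 - 1, p.2.1 + j, p.2.2 - 1)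
    else
      ((1 - q ^ (j + 1))⁻¹ * (qv q n p.1)⁻¹) • sgl n (p.1 + (j : ZMod n), p.2.1 - 1, p.2.2 + j) +
      Hh q p.1.val j • sgl n (p.1 - 1, p.2.1 + j, p.2.2 - 1))

lemma Uop_sgl (s : ZMod n) (a b : ℤ) :
    Uop q n (sgl n (s, a, b)) = qv q n s • sgl n (s, a + 1, b) := by
  rw [Uop, sgl, opOf_single, one_smul]

lemma Vop_sgl (s : ZMod n) (a b : ℤ) :
    Vop k n (sgl n (s, a, b)) = sgl n (s + 1, a, b + 1) := by
  rw [Vop, sgl, opOf_single, one_smul]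

lemma Upow_sgl (j : ℕ) (s : ZMod n) (a b : ℤ) :
    (Uop q n ^ j) (sgl n (s, a, b)) = (qv q n s) ^ j • sgl n (s, a + (j : ℤ), b) := by
  induction j with
  | zero => simp
  | succ j ih =>
    rw [pow_succ', Module.End.mul_apply, ih, map_smul, Uop_sgl, smul_smul, ← pow_succ]
    push_cast
    ring_nf

lemma Vpow_sgl (j : ℕ) (s : ZMod n) (a b : ℤ) :
    (Vop k n ^ j) (sgl n (s, a, b)) = sgl n (s + (j : ZMod n), a, b + (j : ℤ)) := by
  induction j with
  | zero => simp
  | succ j ih =>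
    rw [pow_succ', Module.End.mul_apply, ih, Vop_sgl]
    push_cast
    ring_nf

lemma end_ext {f g : Module.End k (M k n)} (h : ∀ p, f (sgl n p) = g (sgl n p)) : f = g :=
  Finsupp.lhom_ext fun p r => by
    have hh : (Finsupp.single p r : M k n) = r • sgl n p := by
      rw [sgl, Finsupp.smul_single, smul_eq_mul, mul_one]
    rw [hh, map_smul, map_smul, h p]

lemma R0 (hqn : q ^ n = 1) : Uop q n * Vop k n = q • (Vop k n * Uop q n) := by
  apply end_ext
  rintro ⟨s, a, b⟩
  rw [Module.End.mul_apply, LinearMap.smul_apply, Module.End.mul_apply, Vop_sgl, Uop_sgl, Uop_sgl,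
    map_smul, Vop_sgl, smul_smul, qv_add_one q n hqn]

lemma Wop_sgl (j : ℕ) (s : ZMod n) (a b : ℤ) :
    Wop q n j (sgl n (s, a, b)) =
      if n ∣ (j + 1) then
        ((qv q n s)⁻¹ * (a : k)) • sgl n (s - 1, a - 1, b + (j : ℤ)) +
        (q * (qv q n s)⁻¹ * (b : k)) • sgl n (s - 1, a + (j : ℤ), b - 1)
      else
        ((1 - q ^ (j + 1))⁻¹ * (qv q n s)⁻¹) • sgl n (s + (j : ZMod n), a - 1, b + (j : ℤ)) +
        Hh q s.val j • sgl n (s - 1, a + (j : ℤ), b - 1) := by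
  rw [Wop, sgl, opOf_single, one_smul]

lemma jcast_crit (j : ℕ) (hcrit : n ∣ (j + 1)) : ((j : ZMod n)) = -1 := by
  have h : (((j + 1 : ℕ)) : ZMod n) = 0 := (ZMod.natCast_eq_zero_iff _ n).mpr hcrit
  push_cast at h
  linear_combination h

lemma R1 (hq : ∀ m : ℕ, q ^ m = 1 ↔ n ∣ m) (j : ℕ) :
    Wop q n j * Uop q n = q • (Uop q n * Wop q n j) + Vop k n ^ j := by
  have hqn := hqn' q n hq
  have hq0 := hq0' q n hq
  have hqv := qv_ne_zero q n hq0
  apply end_ext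
  rintro ⟨s, a, b⟩
  rw [Module.End.mul_apply, LinearMap.add_apply, LinearMap.smul_apply, Module.End.mul_apply,
    Uop_sgl, map_smul, Vpow_sgl]
  by_cases hcrit : n ∣ (j + 1)
  · rw [jcast_crit n j hcrit]
    simp only [Wop_sgl, if_pos hcrit, smul_add, smul_smul, map_add, map_smul, Uop_sgl,
      qv_sub_one q n hqn hq0]
    rw [show (a + 1 - 1 : ℤ) = a from by ring, show (a - 1 + 1 : ℤ) = a from by ring,
      show (a + ↑j + 1 : ℤ) = a + 1 + ↑j from by ring,
      show (s + -1 : ZMod n) = s - 1 from by ring,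
      show (qv q n s * ((qv q n s)⁻¹ * ((a + 1 : ℤ) : k))) = ((a : k) + 1) from by
        rw [mul_inv_cancel_left₀ (hqv s)]; push_cast; ring,
      show (qv q n s * (q * (qv q n s)⁻¹ * (b : k))) = q * (b : k) from by
        field_simp [hqv s],
      show (q * ((qv q n s)⁻¹ * (a : k) * (q⁻¹ * qv q n s))) = (a : k) from by
        field_simp [hqv s, hq0],
      show (q * (q * (qv q n s)⁻¹ * (b : k) * (q⁻¹ * qv q n s))) = q * (b : k) from by
        field_simp [hqv s, hq0]]
    module
  · have hz1 : q ^ (j + 1) ≠ 1 := fun h => hcrit ((hq _).mp h)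
    have h1z : (1 : k) - q ^ (j + 1) ≠ 0 := sub_ne_zero.mpr (Ne.symm hz1)
    simp only [Wop_sgl, if_neg hcrit, smul_add, smul_smul, map_add, map_smul, Uop_sgl,
      qv_sub_one q n hqn hq0, qv_add q n hqn, qv_natCast q n hqn]
    rw [show (a + 1 - 1 : ℤ) = a from by ring, show (a - 1 + 1 : ℤ) = a from by ring,
      show (a + ↑j + 1 : ℤ) = a + 1 + ↑j from by ring,
      show (qv q n s * ((1 - q ^ (j + 1))⁻¹ * (qv q n s)⁻¹)) = (1 - q ^ (j + 1))⁻¹ from by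
        field_simp [hqv s],
      show (q * ((1 - q ^ (j + 1))⁻¹ * (qv q n s)⁻¹ * (qv q n s * q ^ j)))
          = (1 - q ^ (j + 1))⁻¹ - 1 from by
        field_simp [hqv s, h1z]
        ring,
      show (q * (Hh q s.val j * (q⁻¹ * qv q n s))) = qv q n s * Hh q s.val j from by
        field_simp [hq0]]
    module

lemma R2 (hq : ∀ m : ℕ, q ^ m = 1 ↔ n ∣ m) (j : ℕ) :
    Wop q n j * Vop k n = q⁻¹ • (Vop k n * Wop q n j) + Uop q n ^ j := by
  have hqn := hqn' q n hq
  have hq0 := hq0' q n hq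
  have hqv := qv_ne_zero q n hq0
  apply end_ext
  rintro ⟨s, a, b⟩
  rw [Module.End.mul_apply, LinearMap.add_apply, LinearMap.smul_apply, Module.End.mul_apply,
    Vop_sgl, Upow_sgl]
  by_cases hcrit : n ∣ (j + 1)
  · simp only [Wop_sgl, if_pos hcrit, smul_add, smul_smul, map_add, map_smul, Vop_sgl,
      qv_add_one q n hqn]
    rw [show (s + 1 - 1 : ZMod n) = s from by ring, show (s - 1 + 1 : ZMod n) = s from by ring,
      show (b + 1 + (j : ℤ) : ℤ) = b + ↑j + 1 from by ring,
      show (b + 1 - 1 : ℤ) = b from by ring, show (b - 1 + 1 : ℤ) = b from by ring,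
      show ((q * qv q n s)⁻¹ * (a : k)) = q⁻¹ * ((qv q n s)⁻¹ * (a : k)) from by
        rw [mul_inv]; ring,
      show (q * (q * qv q n s)⁻¹ * ((b + 1 : ℤ) : k))
          = q⁻¹ * (q * (qv q n s)⁻¹ * (b : k)) + (qv q n s)⁻¹ from by
        push_cast; field_simp [hq0, hqv s],
      show (qv q n s ^ j : k) = (qv q n s)⁻¹ from (qv_crit q n hq j hcrit s).symm]
    module
  · simp only [Wop_sgl, if_neg hcrit, smul_add, smul_smul, map_add, map_smul, Vop_sgl,
      qv_add_one q n hqn]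
    rw [show (s + 1 - 1 : ZMod n) = s from by ring, show (s - 1 + 1 : ZMod n) = s from by ring,
      show (s + ↑j + 1 : ZMod n) = s + 1 + ↑j from by ring,
      show (b + 1 + (j : ℤ) : ℤ) = b + ↑j + 1 from by ring,
      show (b + 1 - 1 : ℤ) = b from by ring, show (b - 1 + 1 : ℤ) = b from by ring,
      show ((1 - q ^ (j + 1))⁻¹ * (q * qv q n s)⁻¹)
          = q⁻¹ * ((1 - q ^ (j + 1))⁻¹ * (qv q n s)⁻¹) from by rw [mul_inv]; ring,
      Hh_zmod_rec q n hq j hcrit s,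
      show (qv q n s ^ j : k) = q ^ (s.val * j) from by rw [qv, ← pow_mul]]
    module

end

section Hom
open FreeAlgebra
variable (k : Type*) [Field k] (q : k) (d : ℕ) (c : ℕ → k) (n : ℕ) [NeZero n]

noncomputable def Wtot : Module.End k (M k n) :=
  ∑ j ∈ Finset.range (d + 1), c j • Wop q n j

noncomputable def gen : Fin 3 → Module.End k (M k n) :=
  ![Uop q n, Vop k n, Wtot k q d c n]

noncomputable def rho : FreeAlgebra k (Fin 3) →ₐ[k] Module.End k (M k n) :=
  FreeAlgebra.lift k (gen k q d c n)

variable {k q d c n}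

lemma rho_rel (hq : ∀ m : ℕ, q ^ m = 1 ↔ n ∣ m) :
    (rho k q d c n) (ι k (0 : Fin 3) * ι k (1 : Fin 3)) =
    (rho k q d c n) (q • (ι k (1 : Fin 3) * ι k (0 : Fin 3))) := by
  simp only [map_mul, map_smul, rho, FreeAlgebra.lift_ι_apply, gen,
    Matrix.cons_val_zero, Matrix.cons_val_one, Matrix.head_cons]
  exact R0 q n (hqn' q n hq)

lemma rho_rel_wu (hq : ∀ m : ℕ, q ^ m = 1 ↔ n ∣ m) :
    (rho k q d c n) (ι k (2 : Fin 3) * ι k (0 : Fin 3)) =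
    (rho k q d c n) (q • (ι k (0 : Fin 3) * ι k (2 : Fin 3)) +
      ∑ j ∈ Finset.range (d + 1), c j • ι k (1 : Fin 3) ^ j) := by
  simp only [map_mul, map_smul, map_add, map_sum, map_pow, rho, FreeAlgebra.lift_ι_apply, gen,
    Matrix.cons_val_zero, Matrix.cons_val_one, Matrix.head_cons]
  have h2 : (![Uop q n, Vop k n, Wtot k q d c n] : Fin 3 → Module.End k (M k n)) 2
      = Wtot k q d c n := rfl
  rw [h2, Wtot, Finset.sum_mul, Finset.mul_sum]
  have : ∀ j ∈ Finset.range (d + 1),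
      (c j • Wop q n j) * Uop q n
        = q • (Uop q n * (c j • Wop q n j)) + c j • Vop k n ^ j := by
    intro j _
    rw [smul_mul_assoc, R1 q n hq j, mul_smul_comm, smul_add, smul_comm q (c j), smul_smul]
  rw [Finset.sum_congr rfl this, Finset.sum_add_distrib, ← Finset.smul_sum]

lemma rho_rel_wv (hq : ∀ m : ℕ, q ^ m = 1 ↔ n ∣ m) :
    (rho k q d c n) (ι k (2 : Fin 3) * ι k (1 : Fin 3)) =
    (rho k q d c n) (q⁻¹ • (ι k (1 : Fin 3) * ι k (2 : Fin 3)) +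
      ∑ j ∈ Finset.range (d + 1), c j • ι k (0 : Fin 3) ^ j) := by
  simp only [map_mul, map_smul, map_add, map_sum, map_pow, rho, FreeAlgebra.lift_ι_apply, gen,
    Matrix.cons_val_zero, Matrix.cons_val_one, Matrix.head_cons]
  have h2 : (![Uop q n, Vop k n, Wtot k q d c n] : Fin 3 → Module.End k (M k n)) 2
      = Wtot k q d c n := rfl
  rw [h2, Wtot, Finset.sum_mul, Finset.mul_sum]
  have : ∀ j ∈ Finset.range (d + 1),
      (c j • Wop q n j) * Vop k n
        = q⁻¹ • (Vop k n * (c j • Wop q n j)) + c j • Uop q n ^ j := by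
    intro j _
    rw [smul_mul_assoc, R2 q n hq j, mul_smul_comm, smul_add, smul_comm q⁻¹ (c j), smul_smul]
  rw [Finset.sum_congr rfl this, Finset.sum_add_distrib, ← Finset.smul_sum]

end Hom
end BqfRep

namespace BqfRep
open FreeAlgebra

lemma forward {k : Type*} [Field k] (q : k) (d : ℕ) (c : ℕ → k) (n : ℕ) [NeZero n]
    (hq : ∀ m : ℕ, q ^ m = 1 ↔ n ∣ m)
    (hcent : (∑ j ∈ Finset.range (d + 1), c j •
        (RingQuot.mkAlgHom k (BqfRel k q d c) (ι k (0 : Fin 3))) ^ j)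
      ∈ Subalgebra.center k (RingQuot (BqfRel k q d c))) :
    ∀ j ≤ d, c j ≠ 0 → n ∣ j := by
  intro j0 hj0 hc0
  have hrel : ∀ ⦃x y⦄, BqfRel k q d c x y → (rho k q d c n) x = (rho k q d c n) y := by
    intro x y h
    cases h with
    | uv => exact rho_rel hq
    | wu => exact rho_rel_wu hq
    | wv => exact rho_rel_wv hq
  have hcomm := Subalgebra.mem_center_iff.mp hcent
      (RingQuot.mkAlgHom k (BqfRel k q d c) (ι k (1 : Fin 3)))
  have h2 := congrArg (RingQuot.liftAlgHom k ⟨rho k q d c n, hrel⟩) hcomm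
  simp only [map_mul, map_sum, map_smul, map_pow, RingQuot.liftAlgHom_mkAlgHom_apply,
    rho, FreeAlgebra.lift_ι_apply, gen, Matrix.cons_val_zero, Matrix.cons_val_one,
    Matrix.head_cons] at h2
  have h3 := LinearMap.congr_fun h2 (sgl n ((0 : ZMod n), (0 : ℤ), (0 : ℤ)))
  have hqv0 : qv q n (0 : ZMod n) = 1 := by rw [qv, ZMod.val_zero, pow_zero]
  have hqv1 : qv q n (1 : ZMod n) = q := qv_one' q n ((hq n).mpr dvd_rfl)
  rw [Module.End.mul_apply, Module.End.mul_apply] at h3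
  simp only [LinearMap.coe_sum, Finset.sum_apply, LinearMap.smul_apply, Upow_sgl,
    hqv0, one_pow, one_smul, map_sum, map_smul, Vop_sgl, Upow_sgl, hqv1] at h3
  have h4 := DFunLike.congr_fun h3 ((1 : ZMod n), (j0 : ℤ), (1 : ℤ))
  simp only [Finsupp.finset_sum_apply, Finsupp.smul_apply, sgl, Finsupp.single_apply,
    Prod.mk.injEq, smul_eq_mul, mul_ite, mul_one, mul_zero] at h4
  simp only [zero_add, Nat.cast_inj, hqv1, eq_self_iff_true, true_and, and_true] at h4
  rw [Finset.sum_ite_eq' (Finset.range (d + 1)) j0 (fun x => c x),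
    Finset.sum_ite_eq' (Finset.range (d + 1)) j0 (fun x => c x * q ^ x),
    if_pos (Finset.mem_range_succ_iff.mpr hj0), if_pos (Finset.mem_range_succ_iff.mpr hj0)] at h4
  exact (hq j0).mp (mul_left_cancel₀ hc0 (by rw [mul_one]; exact h4.symm))

end BqfRep
open BqfAux Finset in
theorem bqf_fu_fv_central_iff (k : Type*) [Field k] [CharZero k] (q : k)
    (d : ℕ) (c : ℕ → k) (n : ℕ) (hn : 2 ≤ n) (hq : IsPrimitiveRoot q n) :
    let u := RingQuot.mkAlgHom k (BqfRel k q d c) (ι k (0 : Fin 3))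
    let v := RingQuot.mkAlgHom k (BqfRel k q d c) (ι k (1 : Fin 3))
    let w := RingQuot.mkAlgHom k (BqfRel k q d c) (ι k (2 : Fin 3))
    let fu := ∑ j ∈ Finset.range (d + 1), c j • u ^ j
    let fv := ∑ j ∈ Finset.range (d + 1), c j • v ^ j
    ((fu ∈ Subalgebra.center k (RingQuot (BqfRel k q d c)) ∧
      fv ∈ Subalgebra.center k (RingQuot (BqfRel k q d c))) ↔
        ∀ j ≤ d, c j ≠ 0 → n ∣ j) ∧
    ((∀ j ≤ d, c j ≠ 0 → n ∣ j) →
      w ^ n ∈ Subalgebra.center k (RingQuot (BqfRel k q d c))) := by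
  intro u v w fu fv
  have hqn : q ^ n = 1 := hq.pow_eq_one
  have hq0 : q ≠ 0 := by
    intro h
    rw [h, zero_pow (by omega : n ≠ 0)] at hqn
    exact zero_ne_one hqn
  have hq1 : q ≠ 1 := by
    intro h
    have := (hq.pow_eq_one_iff_dvd 1).mp (by rw [h, one_pow])
    have := Nat.le_of_dvd one_pos this
    omega
  have hqi1 : q⁻¹ ≠ 1 := fun h => hq1 (by rw [← inv_inv q, h, inv_one])
  have hqin : q⁻¹ ^ n = 1 := by rw [inv_pow, hqn, inv_one]
  have ruv : u * v = q • (v * u) := by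
    simpa [map_mul, map_smul] using
      RingQuot.mkAlgHom_rel k (BqfRel.uv (k := k) (q := q) (d := d) (c := c))
  have rwu : w * u = q • (u * w) + fv := by
    simpa [map_mul, map_smul, map_add, map_sum, map_pow] using
      RingQuot.mkAlgHom_rel k (BqfRel.wu (k := k) (q := q) (d := d) (c := c))
  have rwv : w * v = q⁻¹ • (v * w) + fu := by
    simpa [map_mul, map_smul, map_add, map_sum, map_pow] using
      RingQuot.mkAlgHom_rel k (BqfRel.wv (k := k) (q := q) (d := d) (c := c))
  have main : (∀ j ≤ d, c j ≠ 0 → n ∣ j) →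
      (fu ∈ Subalgebra.center k (RingQuot (BqfRel k q d c)) ∧
       fv ∈ Subalgebra.center k (RingQuot (BqfRel k q d c))) ∧
      w ^ n ∈ Subalgebra.center k (RingQuot (BqfRel k q d c)) := by
    intro hdvd
    have hc : ∀ j ≤ d, c j ≠ 0 → q ^ j = 1 := fun j hj hcj =>
      (hq.pow_eq_one_iff_dvd j).mpr (hdvd j hj hcj)
    have hc' : ∀ j ≤ d, c j ≠ 0 → q⁻¹ ^ j = 1 := fun j hj hcj => by
      rw [inv_pow, hc j hj hcj, inv_one]
    have fu_v : fu * v = v * fu := poly_comm q u v fu d c rfl (upow_v q u v ruv) hc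
    have fv_u : fv * u = u * fv := poly_comm q⁻¹ v u fv d c rfl (vpow_u q u v hq0 ruv) hc'
    have fu_u : fu * u = u * fu :=
      poly_comm 1 u u fu d c rfl
        (fun j => by rw [one_pow, one_smul, ← pow_succ, ← pow_succ'])
        (fun _ _ _ => one_pow _)
    have fv_v : fv * v = v * fv :=
      poly_comm 1 v v fv d c rfl
        (fun j => by rw [one_pow, one_smul, ← pow_succ, ← pow_succ'])
        (fun _ _ _ => one_pow _)
    have w_fu : w * fu = fu * w :=
      poly_comm2 w u fu d c rfl
        (fun j hj hcj => w_upow_comm q u w fv hq1 rwu fv_u j (hc j hj hcj))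
    have w_fv : w * fv = fv * w :=
      poly_comm2 w v fv d c rfl
        (fun j hj hcj => w_upow_comm q⁻¹ v w fu hqi1 rwv fu_v j (hc' j hj hcj))
    refine ⟨⟨bqf_central q d c fu fu_u.symm fu_v.symm w_fu, 
             bqf_central q d c fv fv_u.symm ?_ w_fv⟩, 
            bqf_central q d c (w ^ n) ?_ ?_ ?_⟩
    · exact fv_v.symm
    · exact (wpow_u_comm q u w fv hq1 rwu w_fv n hqn).symm
    · exact (wpow_u_comm q⁻¹ v w fu hqi1 rwv w_fu n hqin).symm
    · exact ((Commute.refl w).pow_right n).symm ▸ rfl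
  refine ⟨⟨?_, fun h => (main h).1⟩, fun h => (main h).2⟩
  intro hcent
  haveI : NeZero n := ⟨by omega⟩
  exact BqfRep.forward q d c n (fun m => hq.pow_eq_one_iff_dvd m) hcent.1
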